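/- Let a : ℝ^d → ℝ be a jump kernel (symmetric, strictly positive, bounded, continuous, integrable with ∫ a = 1) satisfying assumption (A): â(k) = 1 − A|k|^α + o(|k|^α) as k → 0 for some A > 0 and 0 < α ≤ 2, and assume d > α. Then 1 − â(k) > 0 for every k ≠ 0 and the function k ↦ â(k)/(1 − â(k)) is integrable on every compact subset of ℝ^d. -/

import Mathlib

open MeasureTheory Asymptotics

/-- Integrability of `‖x‖ ^ (-α)` on a ball in `ℝ^d` when `α < d`. -/
lemma aux_rpow_integrableOn_ball (d : ℕ) {α : ℝ} (hα : 0 < α) (hαd : α < d) (R : ℝ) :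
    IntegrableOn (fun x : EuclideanSpace ℝ (Fin d) => ‖x‖ ^ (-α))
      (Metric.ball 0 R) := by
  have hmeas : Measurable fun x : EuclideanSpace ℝ (Fin d) => ‖x‖ ^ (-α) := by
    fun_prop
  set μ := (volume : Measure (EuclideanSpace ℝ (Fin d))).restrict (Metric.ball 0 R) with hμ
  have f_nn : ∀ x : EuclideanSpace ℝ (Fin d), 0 ≤ ‖x‖ ^ (-α) := fun x =>
    Real.rpow_nonneg (norm_nonneg x) _
  refine ⟨hmeas.aestronglyMeasurable, ?_⟩
  rw [hasFiniteIntegral_iff_ofReal (Filter.Eventually.of_forall f_nn)]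
  rw [lintegral_eq_lintegral_meas_le μ (Filter.Eventually.of_forall f_nn) hmeas.aemeasurable]
  have hmeasset : ∀ t : ℝ, MeasurableSet {a : EuclideanSpace ℝ (Fin d) | t ≤ ‖a‖ ^ (-α)} :=
    fun t => measurableSet_le measurable_const hmeas
  have hsub : ∀ t : ℝ, 1 < t → {a : EuclideanSpace ℝ (Fin d) | t ≤ ‖a‖ ^ (-α)} ⊆
      Metric.closedBall 0 (t ^ (-α⁻¹)) := by
    intro t ht a ha
    simp only [Set.mem_setOf_eq] at ha
    have ht0 : (0 : ℝ) < t := lt_trans one_pos ht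
    have ha0 : a ≠ 0 := by
      rintro rfl
      rw [norm_zero, Real.zero_rpow (neg_ne_zero.mpr hα.ne')] at ha
      linarith
    have hna : 0 < ‖a‖ := norm_pos_iff.mpr ha0
    have h2 : (‖a‖ ^ (-α)) ^ (-α⁻¹) ≤ t ^ (-α⁻¹) :=
      Real.rpow_le_rpow_of_nonpos ht0 ha (neg_nonpos.mpr (inv_nonneg.mpr hα.le))
    have h3 : (‖a‖ ^ (-α)) ^ (-α⁻¹) = ‖a‖ := by
      rw [← Real.rpow_mul (norm_nonneg a)]
      have : -α * -α⁻¹ = 1 := by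
        field_simp
      rw [this, Real.rpow_one]
    rw [Metric.mem_closedBall, dist_zero_right]
    rw [h3] at h2
    exact h2
  calc ∫⁻ t in Set.Ioi (0 : ℝ), μ {a | t ≤ ‖a‖ ^ (-α)}
      ≤ ∫⁻ t in Set.Ioc (0 : ℝ) 1 ∪ Set.Ioi 1, μ {a | t ≤ ‖a‖ ^ (-α)} :=
        lintegral_mono_set Set.Ioi_subset_Ioc_union_Ioi
    _ ≤ (∫⁻ t in Set.Ioc (0 : ℝ) 1, μ {a | t ≤ ‖a‖ ^ (-α)}) +
          ∫⁻ t in Set.Ioi (1 : ℝ), μ {a | t ≤ ‖a‖ ^ (-α)} := lintegral_union_le _ _ _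
    _ < ⊤ := by
        refine ENNReal.add_lt_top.2 ⟨?_, ?_⟩
        · calc (∫⁻ t in Set.Ioc (0 : ℝ) 1, μ {a | t ≤ ‖a‖ ^ (-α)})
              ≤ ∫⁻ _ in Set.Ioc (0 : ℝ) 1,
                  volume (Metric.ball (0 : EuclideanSpace ℝ (Fin d)) R) := by
                refine setLIntegral_mono' measurableSet_Ioc fun t _ => ?_
                refine le_trans (measure_mono (Set.subset_univ _)) ?_
                simp [hμ]
            _ < ⊤ := by
                rw [setLIntegral_const]
                exact ENNReal.mul_lt_top measure_ball_lt_top (by simp [Real.volume_Ioc])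
        · have hexp : -α⁻¹ * d < -1 := by
            have h1 : (1 : ℝ) < α⁻¹ * d := by
              rw [← div_eq_inv_mul]
              exact (one_lt_div hα).2 hαd
            linarith
          have hmaj : ∀ t ∈ Set.Ioi (1 : ℝ), μ {a | t ≤ ‖a‖ ^ (-α)} ≤
              ENNReal.ofReal (t ^ (-α⁻¹ * d)) *
                volume (Metric.ball (0 : EuclideanSpace ℝ (Fin d)) 1) := by
            intro t ht
            have ht1 : (1 : ℝ) < t := ht
            have ht0 : (0 : ℝ) < t := lt_trans one_pos ht1
            have h1 : μ {a | t ≤ ‖a‖ ^ (-α)} ≤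
                volume (Metric.closedBall (0 : EuclideanSpace ℝ (Fin d)) (t ^ (-α⁻¹))) := by
              rw [hμ, Measure.restrict_apply (hmeasset t)]
              exact measure_mono (le_trans Set.inter_subset_left (hsub t ht1))
            rw [Measure.addHaar_closedBall _ _ (Real.rpow_nonneg ht0.le _)] at h1
            have h2 : (t ^ (-α⁻¹)) ^ (Module.finrank ℝ (EuclideanSpace ℝ (Fin d)))
                = t ^ (-α⁻¹ * d) := by
              rw [finrank_euclideanSpace_fin, ← Real.rpow_natCast (t ^ (-α⁻¹)) d,
                ← Real.rpow_mul ht0.le]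
            rwa [h2] at h1
          calc (∫⁻ t in Set.Ioi (1 : ℝ), μ {a | t ≤ ‖a‖ ^ (-α)})
              ≤ ∫⁻ t in Set.Ioi (1 : ℝ), ENNReal.ofReal (t ^ (-α⁻¹ * d)) *
                  volume (Metric.ball (0 : EuclideanSpace ℝ (Fin d)) 1) :=
                setLIntegral_mono' measurableSet_Ioi hmaj
            _ = (∫⁻ t in Set.Ioi (1 : ℝ), ENNReal.ofReal (t ^ (-α⁻¹ * d))) *
                  volume (Metric.ball (0 : EuclideanSpace ℝ (Fin d)) 1) :=
                lintegral_mul_const' _ _ measure_ball_lt_top.ne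
            _ < ⊤ := ENNReal.mul_lt_top
                ((integrableOn_Ioi_rpow_of_lt hexp one_pos).setLIntegral_lt_top)
                measure_ball_lt_top

/-- For a jump kernel `a` satisfying assumption (A):
`â(k) = 1 - A|k|^α + o(|k|^α)` as `k → 0`, with `0 < α ≤ 2` and `d > α`, one has
`1 - â(k) > 0` for all `k ≠ 0` and `k ↦ â(k)/(1 - â(k))` is integrable on every
compact subset of `ℝ^d`. -/
theorem green_symbol_locally_integrable
    (d : ℕ) (a : EuclideanSpace ℝ (Fin d) → ℝ)
    (hsymm : ∀ x, a (-x) = a x)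
    (hpos : ∀ x, 0 < a x)
    (hbdd : ∃ M, ∀ x, a x ≤ M)
    (hcont : Continuous a)
    (hint : Integrable a)
    (hnorm : ∫ x, a x = 1)
    (hatA : EuclideanSpace ℝ (Fin d) → ℂ)
    (hhatA : ∀ k, hatA k = ∫ y, Complex.exp (-(Complex.I * ((inner ℝ k y : ℝ) : ℂ))) * (a y : ℂ))
    (A α : ℝ) (hA : 0 < A) (hα : 0 < α) (hα2 : α ≤ 2)
    (hAssumptionA :
      (fun k : EuclideanSpace ℝ (Fin d) => hatA k - ((1 - A * ‖k‖ ^ α : ℝ) : ℂ))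
        =o[nhds 0] fun k => ‖k‖ ^ α)
    (hdα : α < d) :
    (∀ k, k ≠ 0 → (hatA k).im = 0 ∧ 0 < 1 - (hatA k).re) ∧
    (∀ K : Set (EuclideanSpace ℝ (Fin d)), IsCompact K →
      IntegrableOn (fun k => hatA k / (1 - hatA k)) K) := by
  -- norm of the integrand
  have hnormeq : ∀ (k y : EuclideanSpace ℝ (Fin d)),
      ‖Complex.exp (-(Complex.I * ((inner ℝ k y : ℝ) : ℂ))) * (a y : ℂ)‖ = a y := by
    intro k y
    have h1 : -(Complex.I * (((inner ℝ k y : ℝ) : ℝ) : ℂ)) =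
        ((-(inner ℝ k y : ℝ) : ℝ) : ℂ) * Complex.I := by
      push_cast; ring
    rw [norm_mul, h1, Complex.norm_exp_ofReal_mul_I, one_mul, Complex.norm_real,
      Real.norm_eq_abs, abs_of_pos (hpos y)]
  -- continuity of the integrand in y
  have hconty : ∀ k : EuclideanSpace ℝ (Fin d), Continuous fun y : EuclideanSpace ℝ (Fin d) =>
      Complex.exp (-(Complex.I * ((inner ℝ k y : ℝ) : ℂ))) * (a y : ℂ) := by
    intro k
    have h1 : Continuous fun y : EuclideanSpace ℝ (Fin d) => (inner ℝ k y : ℝ) :=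
      continuous_const.inner continuous_id
    exact ((Complex.continuous_exp.comp
      ((continuous_const.mul (Complex.continuous_ofReal.comp h1)).neg)).mul
      (Complex.continuous_ofReal.comp hcont))
  -- integrability of the integrand
  have hinteg : ∀ k : EuclideanSpace ℝ (Fin d),
      Integrable (fun y => Complex.exp (-(Complex.I * ((inner ℝ k y : ℝ) : ℂ))) * (a y : ℂ)) := by
    intro k
    exact hint.mono' (hconty k).aestronglyMeasurable
      (Filter.Eventually.of_forall fun y => (hnormeq k y).le)
  -- imaginary part vanishes
  have him : ∀ k, (hatA k).im = 0 := by
    intro k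
    have h1 : (hatA k).im =
        ∫ y, (Complex.exp (-(Complex.I * ((inner ℝ k y : ℝ) : ℂ))) * (a y : ℂ)).im := by
      rw [hhatA k]
      exact (integral_im (hinteg k)).symm
    have h2 : ∀ y : EuclideanSpace ℝ (Fin d),
        (Complex.exp (-(Complex.I * ((inner ℝ k y : ℝ) : ℂ))) * (a y : ℂ)).im
          = -(Real.sin (inner ℝ k y) * a y) := by
      intro y
      rw [Complex.mul_im]
      simp [Complex.exp_im, Complex.exp_re, Complex.neg_re, Complex.neg_im, Complex.mul_re,
        Complex.mul_im, Real.sin_neg, Real.cos_neg]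
    rw [h1]
    simp_rw [h2]
    rw [integral_neg, neg_eq_zero]
    have hS : (∫ y, Real.sin (inner ℝ k y) * a y) = -∫ y, Real.sin (inner ℝ k y) * a y := by
      conv_lhs => rw [← integral_neg_eq_self (fun y => Real.sin ((inner ℝ k y : ℝ)) * a y) volume]
      rw [← integral_neg]
      congr 1
      funext y
      rw [inner_neg_right, hsymm, Real.sin_neg]
      ring
    linarith
  -- real part
  have hcos_int : ∀ k : EuclideanSpace ℝ (Fin d),
      Integrable (fun y => Real.cos (inner ℝ k y) * a y) := by
    intro k
    have h1 : Continuous fun y : EuclideanSpace ℝ (Fin d) => Real.cos (inner ℝ k y) * a y :=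
      (Real.continuous_cos.comp (continuous_const.inner continuous_id)).mul hcont
    refine hint.mono' h1.aestronglyMeasurable (Filter.Eventually.of_forall fun y => ?_)
    rw [Real.norm_eq_abs, abs_mul, abs_of_pos (hpos y)]
    exact mul_le_of_le_one_left (hpos y).le (Real.abs_cos_le_one _)
  have hre : ∀ k, (hatA k).re = ∫ y, Real.cos (inner ℝ k y) * a y := by
    intro k
    have h1 : (hatA k).re =
        ∫ y, (Complex.exp (-(Complex.I * ((inner ℝ k y : ℝ) : ℂ))) * (a y : ℂ)).re := by
      rw [hhatA k]
      exact (integral_re (hinteg k)).symm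
    rw [h1]
    congr 1
    funext y
    rw [Complex.mul_re]
    simp [Complex.exp_im, Complex.exp_re, Complex.neg_re, Complex.neg_im, Complex.mul_re,
      Complex.mul_im, Real.sin_neg, Real.cos_neg]
  -- strict positivity of 1 - re for k ≠ 0
  have hpos1 : ∀ k : EuclideanSpace ℝ (Fin d), k ≠ 0 → 0 < 1 - (hatA k).re := by
    intro k hk
    have h1 : 1 - (hatA k).re = ∫ y, (1 - Real.cos (inner ℝ k y)) * a y := by
      rw [hre k]
      rw [show (∫ y, (1 - Real.cos ((inner ℝ k y : ℝ))) * a y)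
          = ∫ y, (a y - Real.cos ((inner ℝ k y : ℝ)) * a y) by congr 1; funext y; ring]
      rw [integral_sub hint (hcos_int k), hnorm]
    rw [h1]
    have hnn : ∀ y : EuclideanSpace ℝ (Fin d), 0 ≤ (1 - Real.cos (inner ℝ k y)) * a y := by
      intro y
      have h2 := Real.cos_le_one ((inner ℝ k y : ℝ))
      have h3 := (hpos y).le
      nlinarith
    have hfi : Integrable (fun y : EuclideanSpace ℝ (Fin d) =>
        (1 - Real.cos (inner ℝ k y)) * a y) := by
      rw [show (fun y : EuclideanSpace ℝ (Fin d) => (1 - Real.cos ((inner ℝ k y : ℝ))) * a y)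
          = fun y => a y - Real.cos ((inner ℝ k y : ℝ)) * a y by funext y; ring]
      exact hint.sub (hcos_int k)
    rw [integral_pos_iff_support_of_nonneg_ae (Filter.Eventually.of_forall hnn) hfi]
    -- the support contains a nonempty open set
    set y₀ : EuclideanSpace ℝ (Fin d) := (Real.pi / ‖k‖ ^ 2) • k with hy₀def
    have hknorm : (0 : ℝ) < ‖k‖ := norm_pos_iff.mpr hk
    have hy₀ : (inner ℝ k y₀ : ℝ) = Real.pi := by
      rw [hy₀def, real_inner_smul_right, real_inner_self_eq_norm_sq]
      field_simp
    have hopen : IsOpen {y : EuclideanSpace ℝ (Fin d) | Real.cos (inner ℝ k y) < 1} :=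
      isOpen_lt (Real.continuous_cos.comp (continuous_const.inner continuous_id)) continuous_const
    have hsubs : {y : EuclideanSpace ℝ (Fin d) | Real.cos (inner ℝ k y) < 1} ⊆
        Function.support (fun y => (1 - Real.cos (inner ℝ k y)) * a y) := by
      intro y hy
      have h2 : Real.cos ((inner ℝ k y : ℝ)) < 1 := hy
      have h3 := hpos y
      simp only [Function.mem_support]
      exact ne_of_gt (mul_pos (by linarith) h3)
    have hne : y₀ ∈ {y : EuclideanSpace ℝ (Fin d) | Real.cos (inner ℝ k y) < 1} := by
      rw [Set.mem_setOf_eq, hy₀, Real.cos_pi]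
      norm_num
    exact lt_of_lt_of_le (hopen.measure_pos volume ⟨y₀, hne⟩) (measure_mono hsubs)
  -- continuity of hatA
  have hcontA : Continuous hatA := by
    have heq : hatA = fun k =>
        ∫ y, Complex.exp (-(Complex.I * ((inner ℝ k y : ℝ) : ℂ))) * (a y : ℂ) := funext hhatA
    rw [heq]
    apply continuous_of_dominated (bound := a)
    · intro k
      exact (hconty k).aestronglyMeasurable
    · intro k
      exact Filter.Eventually.of_forall fun y => (hnormeq k y).le
    · exact hint
    · refine Filter.Eventually.of_forall fun y => ?_
      have h1 : Continuous fun k : EuclideanSpace ℝ (Fin d) => (inner ℝ k y : ℝ) :=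
        continuous_id.inner continuous_const
      exact ((Complex.continuous_exp.comp
        ((continuous_const.mul (Complex.continuous_ofReal.comp h1)).neg)).mul
        continuous_const)
  -- hatA is bounded by 1 in norm
  have hbd1 : ∀ k, ‖hatA k‖ ≤ 1 := by
    intro k
    rw [hhatA k]
    calc ‖∫ y, Complex.exp (-(Complex.I * ((inner ℝ k y : ℝ) : ℂ))) * (a y : ℂ)‖
        ≤ ∫ y, ‖Complex.exp (-(Complex.I * ((inner ℝ k y : ℝ) : ℂ))) * (a y : ℂ)‖ :=
          norm_integral_le_integral_norm _
      _ = ∫ y, a y := by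
          congr 1
          funext y
          exact hnormeq k y
      _ = 1 := hnorm
  -- 1 - hatA k ≠ 0 for k ≠ 0
  have hne0 : ∀ k : EuclideanSpace ℝ (Fin d), k ≠ 0 → (1 : ℂ) - hatA k ≠ 0 := by
    intro k hk h
    have h1 : ((1 : ℂ) - hatA k).re = 0 := by rw [h]; simp
    rw [Complex.sub_re, Complex.one_re] at h1
    have := hpos1 k hk
    linarith
  refine ⟨fun k hk => ⟨him k, hpos1 k hk⟩, ?_⟩
  -- little-o gives a lower bound near 0
  have hsmall := hAssumptionA.def (show (0 : ℝ) < A / 2 by linarith)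
  rw [Metric.eventually_nhds_iff] at hsmall
  obtain ⟨r, hr, hball⟩ := hsmall
  have hlow : ∀ k : EuclideanSpace ℝ (Fin d), dist k 0 < r →
      A / 2 * ‖k‖ ^ α ≤ ‖(1 : ℂ) - hatA k‖ := by
    intro k hkr
    have h1 := hball hkr
    have hnrm : ‖‖k‖ ^ α‖ = ‖k‖ ^ α := by
      rw [Real.norm_eq_abs, abs_of_nonneg (Real.rpow_nonneg (norm_nonneg k) _)]
    rw [hnrm] at h1
    have hid : (1 : ℂ) - hatA k =
        ((A * ‖k‖ ^ α : ℝ) : ℂ) - (hatA k - ((1 - A * ‖k‖ ^ α : ℝ) : ℂ)) := by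
      push_cast
      ring
    have h2 : ‖((A * ‖k‖ ^ α : ℝ) : ℂ)‖ = A * ‖k‖ ^ α := by
      rw [Complex.norm_real, Real.norm_eq_abs, abs_of_nonneg (by positivity)]
    calc A / 2 * ‖k‖ ^ α = A * ‖k‖ ^ α - A / 2 * ‖k‖ ^ α := by ring
      _ ≤ ‖((A * ‖k‖ ^ α : ℝ) : ℂ)‖ - ‖hatA k - ((1 - A * ‖k‖ ^ α : ℝ) : ℂ)‖ := by
          rw [h2]
          exact sub_le_sub_left h1 _
      _ ≤ ‖((A * ‖k‖ ^ α : ℝ) : ℂ) - (hatA k - ((1 - A * ‖k‖ ^ α : ℝ) : ℂ))‖ :=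
          norm_sub_norm_le _ _
      _ = ‖(1 : ℂ) - hatA k‖ := by rw [← hid]
  -- dimension positivity and no atoms
  have hd0 : 0 < d := by
    by_contra h
    push_neg at h
    interval_cases d
    · simp at hdα
      linarith
  haveI : Nontrivial (EuclideanSpace ℝ (Fin d)) := by
    apply Module.nontrivial_of_finrank_pos (R := ℝ)
    rw [finrank_euclideanSpace_fin]
    exact hd0
  have hsing : (volume : Measure (EuclideanSpace ℝ (Fin d))) {0} = 0 := measure_singleton 0
  -- the main integrability
  intro K hK
  have hKsub : K ⊆ (K \ Metric.ball 0 r) ∪ Metric.ball 0 r := by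
    intro k hk
    by_cases h : k ∈ Metric.ball 0 r
    · exact Or.inr h
    · exact Or.inl ⟨hk, h⟩
  refine IntegrableOn.mono_set ?_ hKsub
  apply IntegrableOn.union
  · -- away from 0 : continuous on a compact set
    have hKc : IsCompact (K \ Metric.ball 0 r) := hK.diff Metric.isOpen_ball
    apply ContinuousOn.integrableOn_compact hKc
    apply ContinuousOn.div hcontA.continuousOn (continuous_const.sub hcontA).continuousOn
    intro k hk
    refine hne0 k ?_
    intro h0
    apply hk.2
    rw [h0]
    exact Metric.mem_ball_self hr
  · -- near 0 : dominated by (2/A) * ‖k‖^(-α)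
    have hdiff : (Metric.ball (0 : EuclideanSpace ℝ (Fin d)) r : Set _) =ᵐ[volume]
        ((Metric.ball (0 : EuclideanSpace ℝ (Fin d)) r \ {0} : Set (EuclideanSpace ℝ (Fin d)))) :=
      (MeasureTheory.diff_ae_eq_self.mpr (measure_mono_null Set.inter_subset_right hsing)).symm
    refine IntegrableOn.congr_set_ae ?_ hdiff
    have hmset : MeasurableSet (Metric.ball (0 : EuclideanSpace ℝ (Fin d)) r \ {0}) :=
      measurableSet_ball.diff (measurableSet_singleton _)
    have hbint : IntegrableOn (fun k : EuclideanSpace ℝ (Fin d) => 2 / A * ‖k‖ ^ (-α))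
        (Metric.ball 0 r \ {0}) := by
      refine IntegrableOn.mono_set ?_ Set.diff_subset
      exact (aux_rpow_integrableOn_ball d hα hdα r).const_mul _
    refine hbint.mono' ?_ ?_
    · -- measurability
      refine ContinuousOn.aestronglyMeasurable ?_ hmset
      apply ContinuousOn.div hcontA.continuousOn (continuous_const.sub hcontA).continuousOn
      intro k hk
      exact hne0 k (by simpa using hk.2)
    · -- the bound
      refine (ae_restrict_mem hmset).mono fun k hk => ?_
      have hk0 : k ≠ 0 := by simpa using hk.2
      have hkr : dist k 0 < r := hk.1
      have hknorm : (0 : ℝ) < ‖k‖ := norm_pos_iff.mpr hk0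
      have hrpow : (0 : ℝ) < ‖k‖ ^ α := Real.rpow_pos_of_pos hknorm _
      have h1 : ‖hatA k / (1 - hatA k)‖ = ‖hatA k‖ / ‖(1 : ℂ) - hatA k‖ := norm_div _ _
      rw [h1]
      have h2 : ‖hatA k‖ / ‖(1 : ℂ) - hatA k‖ ≤ 1 / (A / 2 * ‖k‖ ^ α) := by
        apply div_le_div₀ zero_le_one (hbd1 k) (by positivity) (hlow k hkr)
      refine h2.trans (le_of_eq ?_)
      rw [Real.rpow_neg (norm_nonneg k)]
      field_simp
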